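/- Suppose {P₁,…,P_t} is a (c,t) LP-packing in an abelian group G of order t²c² relative to a subgroup U of order tc, and let I be a b-element subset of {1,…,t}. Then (i) the union ∪_{i∈I} Pᵢ is a regular (tc, bc) Latin square type PDS in G, and (ii) (∪_{i∈I} Pᵢ) ∪ (U∖{1_G}) is a regular (tc, bc+1) Latin square type PDS in G. -/

import Mathlib

open Finset BigOperators

variable {G : Type*}

/-- Number of ordered pairs `(x,y)` with `x,y ∈ D`, `x ≠ y`, `x * y⁻¹ = g`. -/
noncomputable def diffCount [Group G] (D : Set G) (g : G) : ℕ :=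
  Nat.card {p : G × G // p.1 ∈ D ∧ p.2 ∈ D ∧ p.1 ≠ p.2 ∧ p.1 * p.2⁻¹ = g}

/-- `D` is a `(v,k,λ,μ)` partial difference set in `G`. -/
def IsPDS [Group G] (D : Set G) (v k : ℕ) (l m : ℤ) : Prop :=
  Nat.card G = v ∧ Nat.card D = k ∧
    ∀ g : G, g ≠ 1 →
      (g ∈ D → (diffCount D g : ℤ) = l) ∧ (g ∉ D → (diffCount D g : ℤ) = m)

/-- A regular PDS: a PDS avoiding the identity and closed under inversion. -/
def IsRegularPDS [Group G] (D : Set G) (v k : ℕ) (l m : ℤ) : Prop :=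
  IsPDS D v k l m ∧ (1 : G) ∉ D ∧ D⁻¹ = D

/-- A regular `(n,r)` Latin square type PDS. -/
def IsLatinPDS [Group G] (D : Set G) (n r : ℕ) : Prop :=
  IsRegularPDS D (n ^ 2) (r * (n - 1)) ((n : ℤ) + (r : ℤ) ^ 2 - 3 * r) ((r : ℤ) ^ 2 - r)

/-- A regular `(n,r)` negative Latin square type PDS. -/
def IsNegLatinPDS [Group G] (D : Set G) (n r : ℕ) : Prop :=
  IsRegularPDS D (n ^ 2) (r * (n + 1)) (-(n : ℤ) + (r : ℤ) ^ 2 + 3 * r) ((r : ℤ) ^ 2 + r)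

/-- Character sum `χ(D) = ∑_{d ∈ D} χ(d)`. -/
noncomputable def charSum [Group G] (χ : G →* ℂˣ) (D : Set G) : ℂ :=
  ∑ᶠ d ∈ D, (χ d : ℂ)

/-- The multiset of character sums `{χ(P 0), …, χ(P (t-1))}`. -/
noncomputable def charMultiset [Group G] {t : ℕ} (χ : G →* ℂˣ) (P : Fin t → Set G) :
    Multiset ℂ :=
  (Finset.univ.val : Multiset (Fin t)).map fun i => charSum χ (P i)

/-- `χ` is principal on the subgroup `U`. -/
def IsPrincipalOn [Group G] (χ : G →* ℂˣ) (U : Subgroup G) : Prop :=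
  ∀ u ∈ U, χ u = 1

/-- A `(c,t)` LP-packing in `G` relative to `U`. -/
def IsLPPacking [CommGroup G] (c t : ℕ) (P : Fin t → Set G) (U : Subgroup G) : Prop :=
  Nat.card G = t ^ 2 * c ^ 2 ∧ Nat.card U = t * c ∧
    (∀ i, IsLatinPDS (P i) (t * c) c) ∧
    (∀ i j, i ≠ j → Disjoint (P i) (P j)) ∧
    (⋃ i, P i) = Set.univ \ (U : Set G)

/-- A `(c,t-1)` NLP-packing in `G`. -/
def IsNLPPacking [CommGroup G] (c t : ℕ) (P : Fin (t - 1) → Set G) : Prop :=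
  Nat.card G = t ^ 2 * c ^ 2 ∧
    (∀ i, IsNegLatinPDS (P i) (t * c) c) ∧
    IsNegLatinPDS (Set.univ \ ({1} ∪ ⋃ i, P i)) (t * c) (c - 1)

/-- A `(c,t)` LP-partition in `G − V` relative to `H`. -/
def IsLPPartition [CommGroup G] (c t : ℕ) (R : Fin t → Set G) (V H : Subgroup G) : Prop :=
  Nat.card G = t ^ 2 * c ^ 2 ∧ Nat.card V = t * c ^ 2 ∧ H ≤ V ∧
    (∀ i, Nat.card (R i) = (t - 1) * c ^ 2) ∧
    (∀ i j, i ≠ j → Disjoint (R i) (R j)) ∧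
    (⋃ i, R i) = Set.univ \ (V : Set G) ∧
    ∀ χ : G →* ℂˣ, χ ≠ 1 →
      (IsPrincipalOn χ V → charMultiset χ R = Multiset.replicate t (-(c : ℂ) ^ 2)) ∧
      (¬ IsPrincipalOn χ V → IsPrincipalOn χ H →
        charMultiset χ R = Multiset.replicate t 0) ∧
      (¬ IsPrincipalOn χ H →
        charMultiset χ R = ((t : ℂ) - 1) * (c : ℂ) ::ₘ Multiset.replicate (t - 1) (-(c : ℂ)))


/- ===================== auxiliary development ===================== -/

section LPAux

attribute [local instance] Classical.propDecidable

set_option maxHeartbeats 1000000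

variable {H : Type*} [CommGroup H] [Fintype H]

private lemma sum_char_eq_zero (ψ : H →* ℂˣ) (hψ : ψ ≠ 1) : ∑ h : H, (ψ h : ℂ) = 0 := by
  obtain ⟨x, hx⟩ : ∃ x : H, ψ x ≠ 1 := by
    by_contra hc; push_neg at hc; exact hψ (MonoidHom.ext fun y => hc y)
  have hx' : (ψ x : ℂ) ≠ 1 := fun h => hx (Units.ext h)
  have h1 : (ψ x : ℂ) * ∑ h : H, (ψ h : ℂ) = ∑ h : H, (ψ h : ℂ) := by
    rw [Finset.mul_sum]
    rw [← Equiv.sum_comp (Equiv.mulLeft x) (fun h => (ψ h : ℂ))]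
    simp [map_mul, Units.val_mul]
  have h2 : ((ψ x : ℂ) - 1) * ∑ h : H, (ψ h : ℂ) = 0 := by
    rw [sub_mul, one_mul, h1, sub_self]
  exact (mul_eq_zero.mp h2).resolve_left (sub_ne_zero.mpr hx')

private instance finite_dual : Finite (H →* ℂˣ) := by
  let S := rootsOfUnity (Fintype.card H) ℂ
  have fF : Finite (H →* S) := .of_injective _ DFunLike.coe_injective
  refine .of_surjective (fun f : H →* S ↦ (Subgroup.subtype _).comp f) fun f ↦ ?_
  have H' a : f a ∈ S := by
    simp only [mem_rootsOfUnity, ← map_pow, pow_card_eq_one, map_one, S]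
  refine ⟨.codRestrict f S H', MonoidHom.ext fun _ ↦ ?_⟩
  simp only [MonoidHom.coe_comp, Subgroup.coe_subtype, Function.comp_apply,
    MonoidHom.codRestrict_apply]

noncomputable instance : Fintype (H →* ℂˣ) := Fintype.ofFinite _

private lemma card_dual : Fintype.card (H →* ℂˣ) = Fintype.card H := by
  obtain ⟨e⟩ := CommGroup.monoidHom_mulEquiv_of_hasEnoughRootsOfUnity H ℂ
  exact Fintype.card_congr e.toEquiv

private lemma sum_dual_eq (g : H) :
    ∑ χ : H →* ℂˣ, (χ g : ℂ) = if g = 1 then (Fintype.card H : ℂ) else 0 := by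
  split_ifs with hg
  · subst hg; simp [card_dual]
  · obtain ⟨φ, hφ⟩ := CommGroup.exists_apply_ne_one_of_hasEnoughRootsOfUnity H ℂ hg
    let ev : (H →* ℂˣ) →* ℂˣ :=
      { toFun := fun χ => χ g, map_one' := rfl, map_mul' := fun _ _ => rfl }
    have hev : ev ≠ 1 := by
      intro hev
      exact hφ (DFunLike.congr_fun hev φ)
    exact sum_char_eq_zero ev hev

/-- character sum over a finset -/
private noncomputable def SS {H : Type*} [CommGroup H] (χ : H →* ℂˣ) (A : Finset H) : ℂ :=
  ∑ a ∈ A, (χ a : ℂ)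

private lemma SS_one' (A : Finset H) : SS 1 A = A.card := by simp [SS]

private lemma sum_dual_triple (D E : Finset H) (g : H) :
    ∑ χ : H →* ℂˣ, (χ g⁻¹ : ℂ) * ((∑ d ∈ D, (χ d : ℂ)) * (∑ e ∈ E, (χ e⁻¹ : ℂ))) =
      (Fintype.card H : ℂ) * ((D ×ˢ E).filter fun p : H × H => p.1 * p.2⁻¹ = g).card := by
  have key : ∀ χ : H →* ℂˣ, (χ g⁻¹ : ℂ) * ((∑ d ∈ D, (χ d : ℂ)) * (∑ e ∈ E, (χ e⁻¹ : ℂ)))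
      = ∑ p ∈ D ×ˢ E, (χ (g⁻¹ * (p.1 * p.2⁻¹)) : ℂ) := by
    intro χ
    rw [Finset.sum_mul_sum, Finset.mul_sum, Finset.sum_product]
    refine Finset.sum_congr rfl fun d _ => ?_
    rw [Finset.mul_sum]
    refine Finset.sum_congr rfl fun e _ => ?_
    simp only [map_mul, Units.val_mul]
  calc ∑ χ : H →* ℂˣ, (χ g⁻¹ : ℂ) * ((∑ d ∈ D, (χ d : ℂ)) * (∑ e ∈ E, (χ e⁻¹ : ℂ)))
      = ∑ χ : H →* ℂˣ, ∑ p ∈ D ×ˢ E, (χ (g⁻¹ * (p.1 * p.2⁻¹)) : ℂ) :=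
        Finset.sum_congr rfl fun χ _ => key χ
    _ = ∑ p ∈ D ×ˢ E, ∑ χ : H →* ℂˣ, (χ (g⁻¹ * (p.1 * p.2⁻¹)) : ℂ) := Finset.sum_comm
    _ = ∑ p ∈ D ×ˢ E, if p.1 * p.2⁻¹ = g then (Fintype.card H : ℂ) else 0 := by
        refine Finset.sum_congr rfl fun p _ => ?_
        rw [sum_dual_eq]
        congr 1
        simp [inv_mul_eq_one, eq_comm]
    _ = ((D ×ˢ E).filter fun p : H × H => p.1 * p.2⁻¹ = g).card • (Fintype.card H : ℂ) := by
        rw [← Finset.sum_filter, Finset.sum_const]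
    _ = (Fintype.card H : ℂ) * ((D ×ˢ E).filter fun p : H × H => p.1 * p.2⁻¹ = g).card := by
        rw [nsmul_eq_mul, mul_comm]

private lemma diffCount_eq_filter' {D : Set H} {A : Finset H}
    (hmem : ∀ x, x ∈ A ↔ x ∈ D) {g : H} (hg : g ≠ 1) :
    diffCount D g = ((A ×ˢ A).filter fun p : H × H => p.1 * p.2⁻¹ = g).card := by
  rw [diffCount, Nat.card_eq_fintype_card, Fintype.card_subtype]
  congr 1
  ext p
  simp only [Finset.mem_filter, Finset.mem_univ, true_and, Finset.mem_product, hmem]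
  constructor
  · rintro ⟨h1, h2, _, h4⟩; exact ⟨⟨h1, h2⟩, h4⟩
  · rintro ⟨⟨h1, h2⟩, h4⟩
    refine ⟨h1, h2, fun hne => hg ?_, h4⟩
    rw [← h4, hne, mul_inv_cancel]

private lemma SS_inv_eq {D : Set H} {A : Finset H}
    (hmem : ∀ x, x ∈ A ↔ x ∈ D) (hsym : D⁻¹ = D) (χ : H →* ℂˣ) :
    ∑ e ∈ A, ((χ e⁻¹ : ℂ)) = SS χ A := by
  rw [SS]
  refine Finset.sum_nbij' (fun e => e⁻¹) (fun e => e⁻¹) ?_ ?_ ?_ ?_ ?_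
  · intro a ha; rw [hmem] at ha ⊢; rw [← hsym]; simpa using ha
  · intro a ha; rw [hmem] at ha ⊢; rw [← hsym] at ha; simpa using ha
  · intro a _; simp
  · intro a _; simp
  · intro a _; rfl

private lemma card_eq_of_natCard {D : Set H} {A : Finset H}
    (hmem : ∀ x, x ∈ A ↔ x ∈ D) {k : ℕ} (h : Nat.card D = k) : A.card = k := by
  have hAD : A = D.toFinset := by ext x; rw [hmem, Set.mem_toFinset]
  rw [hAD, ← h, Nat.card_coe_set_eq, Set.ncard_eq_toFinset_card']

private lemma latin_charSum {D : Set H} {A : Finset H}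
    (hmem : ∀ x, x ∈ A ↔ x ∈ D) {n r : ℕ} (hn : 1 ≤ n)
    (h : IsLatinPDS D n r) {χ : H →* ℂˣ} (hχ : χ ≠ 1) :
    (SS χ A + r) * (SS χ A - ((n : ℂ) - r)) = 0 := by
  obtain ⟨⟨hv, hk, hlm⟩, h1, hsym⟩ := h
  set S := SS χ A with hS
  have hAcard : A.card = r * (n - 1) := card_eq_of_natCard hmem hk
  set Nc : H → ℕ := fun x => ((A ×ˢ A).filter fun p : H × H => p.1 * p.2⁻¹ = x).card with hNc
  have step1 : S * S = ∑ x : H, (Nc x : ℂ) * (χ x : ℂ) := by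
    have h2 : S * S = (∑ d ∈ A, (χ d : ℂ)) * (∑ e ∈ A, (χ e⁻¹ : ℂ)) := by
      rw [SS_inv_eq hmem hsym χ]; rfl
    have h3 : S * S = ∑ p ∈ A ×ˢ A, (χ (p.1 * p.2⁻¹) : ℂ) := by
      rw [h2, Finset.sum_mul_sum, Finset.sum_product]
      exact Finset.sum_congr rfl fun d _ => Finset.sum_congr rfl fun e _ => by
        simp [map_mul, Units.val_mul]
    rw [h3, ← Finset.sum_fiberwise (A ×ˢ A) (fun p : H × H => p.1 * p.2⁻¹)
      (fun p : H × H => (χ (p.1 * p.2⁻¹) : ℂ))]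
    refine Finset.sum_congr rfl fun x _ => ?_
    have : ∀ p ∈ (A ×ˢ A).filter (fun p : H × H => p.1 * p.2⁻¹ = x),
        (χ (p.1 * p.2⁻¹) : ℂ) = (χ x : ℂ) := fun p hp => by
      rw [(Finset.mem_filter.mp hp).2]
    rw [Finset.sum_congr rfl this, Finset.sum_const, nsmul_eq_mul]
  have hNc1 : Nc 1 = A.card := by
    have himg : ((A ×ˢ A).filter fun p : H × H => p.1 * p.2⁻¹ = 1) =
        A.image (fun a => (a, a)) := by
      ext p
      simp only [Finset.mem_filter, Finset.mem_product, Finset.mem_image, mul_inv_eq_one]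
      constructor
      · rintro ⟨⟨hp1, _⟩, heq⟩
        exact ⟨p.1, hp1, by simp [Prod.ext_iff, heq]⟩
      · rintro ⟨a, ha, rfl⟩
        exact ⟨⟨ha, ha⟩, rfl⟩
    show ((A ×ˢ A).filter fun p : H × H => p.1 * p.2⁻¹ = (1 : H)).card = A.card
    rw [himg, Finset.card_image_of_injective _ fun a b hab => (Prod.mk.injEq _ _ _ _ ▸ hab).1]
  have hNcA : ∀ x ∈ A, (Nc x : ℂ) = (((n : ℤ) + (r : ℤ) ^ 2 - 3 * r : ℤ) : ℂ) := by
    intro x hx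
    have hxD : x ∈ D := (hmem x).mp hx
    have hx1 : x ≠ 1 := fun hx1 => h1 (hx1 ▸ hxD)
    have := (hlm x hx1).1 hxD
    rw [diffCount_eq_filter' hmem hx1] at this
    exact_mod_cast congrArg (fun z : ℤ => (z : ℂ)) this
  have hNcB : ∀ x ∈ (Finset.univ.erase (1 : H)) \ A,
      (Nc x : ℂ) = (((r : ℤ) ^ 2 - r : ℤ) : ℂ) := by
    intro x hx
    obtain ⟨hx1, hxA⟩ := Finset.mem_sdiff.mp hx
    have hx1' : x ≠ 1 := (Finset.mem_erase.mp hx1).1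
    have hxD : x ∉ D := fun hxD => hxA ((hmem x).mpr hxD)
    have := (hlm x hx1').2 hxD
    rw [diffCount_eq_filter' hmem hx1'] at this
    exact_mod_cast congrArg (fun z : ℤ => (z : ℂ)) this
  have hsubset : A ⊆ Finset.univ.erase (1 : H) := by
    intro x hx
    exact Finset.mem_erase.mpr ⟨fun hx1 => h1 (hx1 ▸ (hmem x).mp hx), Finset.mem_univ x⟩
  have hsplit : ∑ x : H, (Nc x : ℂ) * (χ x : ℂ) =
      (∑ x ∈ (Finset.univ.erase (1 : H)) \ A, (Nc x : ℂ) * (χ x : ℂ)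
        + ∑ x ∈ A, (Nc x : ℂ) * (χ x : ℂ)) + (Nc 1 : ℂ) * ((χ 1 : ℂ)) := by
    rw [Finset.sum_sdiff hsubset, Finset.sum_erase_add Finset.univ _ (Finset.mem_univ 1)]
  have hsum_univ : ∑ x : H, (χ x : ℂ) = 0 := sum_char_eq_zero χ hχ
  have hsum_rest : ∑ x ∈ (Finset.univ.erase (1 : H)) \ A, (χ x : ℂ) = -1 - S := by
    have e1 : (∑ x ∈ (Finset.univ.erase (1 : H)) \ A, (χ x : ℂ) + ∑ x ∈ A, (χ x : ℂ))
        + ((χ (1 : H) : ℂ)) = ∑ x : H, (χ x : ℂ) := by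
      rw [Finset.sum_sdiff hsubset, Finset.sum_erase_add Finset.univ _ (Finset.mem_univ 1)]
    rw [hsum_univ] at e1
    have : (χ (1 : H) : ℂ) = 1 := by simp
    rw [this] at e1
    have hSA : ∑ x ∈ A, (χ x : ℂ) = S := rfl
    rw [hSA] at e1
    linear_combination e1
  have e2 : ∑ x ∈ (Finset.univ.erase (1 : H)) \ A, (Nc x : ℂ) * (χ x : ℂ)
      = (((r : ℤ) ^ 2 - r : ℤ) : ℂ) * (-1 - S) := by
    rw [← hsum_rest, Finset.mul_sum]
    exact Finset.sum_congr rfl fun x hx => by rw [hNcB x hx]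
  have e3 : ∑ x ∈ A, (Nc x : ℂ) * (χ x : ℂ)
      = (((n : ℤ) + (r : ℤ) ^ 2 - 3 * r : ℤ) : ℂ) * S := by
    have hSA : S = ∑ x ∈ A, (χ x : ℂ) := rfl
    rw [hSA, Finset.mul_sum]
    exact Finset.sum_congr rfl fun x hx => by rw [hNcA x hx]
  have expand : S * S = (((r : ℤ) ^ 2 - r : ℤ) : ℂ) * (-1 - S)
      + (((n : ℤ) + (r : ℤ) ^ 2 - 3 * r : ℤ) : ℂ) * S + ((r * (n - 1) : ℕ) : ℂ) := by
    rw [step1, hsplit, e2, e3, hNc1, hAcard]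
    simp
  linear_combination (norm := (push_cast [Nat.cast_sub hn]; ring1)) expand

private lemma charSum_to_latin {D : Set H} {A : Finset H}
    (hmem : ∀ x, x ∈ A ↔ x ∈ D) {n R : ℕ} (hn : 1 ≤ n)
    (hGcard : Fintype.card H = n ^ 2)
    (hone : (1 : H) ∉ D) (hsym : D⁻¹ = D)
    (hcard : A.card = R * (n - 1))
    (hval : ∀ χ : H →* ℂˣ, χ ≠ 1 →
      (SS χ A + R) * (SS χ A - ((n : ℂ) - R)) = 0) :
    IsLatinPDS D n R := by
  have hn0 : ((n : ℂ)) ≠ 0 := by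
    exact_mod_cast Nat.cast_ne_zero.mpr (by omega)
  have hn2 : ((n : ℂ) ^ 2) ≠ 0 := pow_ne_zero _ hn0
  have hAD : A = D.toFinset := by ext x; rw [hmem, Set.mem_toFinset]
  have hNatCardD : Nat.card D = R * (n - 1) := by
    rw [Nat.card_coe_set_eq, Set.ncard_eq_toFinset_card', ← hAD]; exact hcard
  have hq : ∀ χ : H →* ℂˣ, χ ≠ 1 →
      SS χ A * SS χ A = ((n : ℂ) - 2 * R) * SS χ A + ((R : ℂ) * n - (R : ℂ) ^ 2) := by
    intro χ hχ
    linear_combination hval χ hχ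
  have main : ∀ g : H, g ≠ 1 →
      ((n : ℂ)) ^ 2 * (diffCount D g : ℂ) =
        ((R : ℂ) * ((n : ℂ) - 1)) ^ 2
          + ((n : ℂ) - 2 * R) * ((if g ∈ D then ((n : ℂ)) ^ 2 else 0) - (R : ℂ) * ((n : ℂ) - 1))
          + ((R : ℂ) * n - (R : ℂ) ^ 2) * (-1) := by
    intro g hg
    have hkey : ((Fintype.card H : ℂ)) * (diffCount D g : ℂ) =
        ∑ χ : H →* ℂˣ, (χ g⁻¹ : ℂ) * (SS χ A * SS χ A) := by
      rw [diffCount_eq_filter' hmem hg]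
      rw [← sum_dual_triple A A g]
      exact Finset.sum_congr rfl fun χ _ => by rw [SS_inv_eq hmem hsym χ]; rfl
    have hSone : SS (1 : H →* ℂˣ) A = (R : ℂ) * ((n : ℂ) - 1) := by
      rw [SS_one', hcard]
      push_cast [Nat.cast_sub hn]
      ring
    have hT : ∑ χ : H →* ℂˣ, (χ g⁻¹ : ℂ) * SS χ A
        = if g ∈ D then ((n : ℂ)) ^ 2 else 0 := by
      have h1 : ∀ χ : H →* ℂˣ, (χ g⁻¹ : ℂ) * SS χ A = ∑ d ∈ A, (χ (g⁻¹ * d) : ℂ) := by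
        intro χ
        rw [SS, Finset.mul_sum]
        exact Finset.sum_congr rfl fun d _ => by simp [map_mul, Units.val_mul]
      rw [Finset.sum_congr rfl fun χ _ => h1 χ, Finset.sum_comm]
      rw [Finset.sum_congr rfl fun d _ => sum_dual_eq (g⁻¹ * d)]
      have h2 : ∀ d ∈ A, (if g⁻¹ * d = 1 then ((Fintype.card H : ℂ)) else 0)
          = (if g = d then ((n : ℂ)) ^ 2 else 0) := by
        intro d _
        rw [hGcard]
        congr 1
        · simp [inv_mul_eq_one]
        · push_cast; ring
      rw [Finset.sum_congr rfl h2, Finset.sum_ite_eq A g fun _ => ((n : ℂ)) ^ 2]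
      simp only [hmem]
    have hE : ∑ χ : H →* ℂˣ, (χ g⁻¹ : ℂ) = 0 := by
      rw [sum_dual_eq g⁻¹, if_neg (inv_ne_one.mpr hg)]
    have hsplit : ∑ χ : H →* ℂˣ, (χ g⁻¹ : ℂ) * (SS χ A * SS χ A)
        = ∑ χ ∈ Finset.univ.erase (1 : H →* ℂˣ), (χ g⁻¹ : ℂ) * (SS χ A * SS χ A)
          + ((R : ℂ) * ((n : ℂ) - 1)) ^ 2 := by
      have := Finset.sum_erase_add Finset.univ
        (fun χ : H →* ℂˣ => (χ g⁻¹ : ℂ) * (SS χ A * SS χ A)) (Finset.mem_univ (1 : H →* ℂˣ))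
      simp only [MonoidHom.one_apply, Units.val_one, one_mul, hSone] at this
      linear_combination -this
    have herase : ∑ χ ∈ Finset.univ.erase (1 : H →* ℂˣ), (χ g⁻¹ : ℂ) * (SS χ A * SS χ A)
        = ((n : ℂ) - 2 * R) * ((if g ∈ D then ((n : ℂ)) ^ 2 else 0) - (R : ℂ) * ((n : ℂ) - 1))
          + ((R : ℂ) * n - (R : ℂ) ^ 2) * (-1) := by
      have h3 : ∀ χ ∈ Finset.univ.erase (1 : H →* ℂˣ),
          (χ g⁻¹ : ℂ) * (SS χ A * SS χ A)
            = ((n : ℂ) - 2 * R) * ((χ g⁻¹ : ℂ) * SS χ A)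
              + ((R : ℂ) * n - (R : ℂ) ^ 2) * (χ g⁻¹ : ℂ) := by
        intro χ hχ
        rw [hq χ (Finset.mem_erase.mp hχ).1]
        ring
      rw [Finset.sum_congr rfl h3, Finset.sum_add_distrib, ← Finset.mul_sum, ← Finset.mul_sum]
      have h4 : ∑ χ ∈ Finset.univ.erase (1 : H →* ℂˣ), (χ g⁻¹ : ℂ) * SS χ A
          = (if g ∈ D then ((n : ℂ)) ^ 2 else 0) - (R : ℂ) * ((n : ℂ) - 1) := by
        have := Finset.sum_erase_add Finset.univ
          (fun χ : H →* ℂˣ => (χ g⁻¹ : ℂ) * SS χ A) (Finset.mem_univ (1 : H →* ℂˣ))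
        rw [hT] at this
        simp only [MonoidHom.one_apply, Units.val_one, one_mul, hSone] at this
        linear_combination this
      have h5 : ∑ χ ∈ Finset.univ.erase (1 : H →* ℂˣ), (χ g⁻¹ : ℂ) = -1 := by
        have := Finset.sum_erase_add Finset.univ
          (fun χ : H →* ℂˣ => (χ g⁻¹ : ℂ)) (Finset.mem_univ (1 : H →* ℂˣ))
        rw [hE] at this
        simp only [MonoidHom.one_apply, Units.val_one] at this
        linear_combination this
      rw [h4, h5]
    rw [hGcard] at hkey
    push_cast at hkey
    rw [hkey, hsplit, herase]
    ring
  refine ⟨⟨by rw [← hGcard, Nat.card_eq_fintype_card], hNatCardD, ?_⟩, hone, hsym⟩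
  intro g hg
  constructor
  · intro hgD
    have h6 := main g hg
    rw [if_pos hgD] at h6
    have h7 : ((n : ℂ)) ^ 2 * (diffCount D g : ℂ)
        = ((n : ℂ)) ^ 2 * ((((n : ℤ) + (R : ℤ) ^ 2 - 3 * R : ℤ) : ℂ)) := by
      rw [h6]; push_cast; ring
    have h8 := mul_left_cancel₀ hn2 h7
    exact_mod_cast h8
  · intro hgD
    have h6 := main g hg
    rw [if_neg hgD] at h6
    have h7 : ((n : ℂ)) ^ 2 * (diffCount D g : ℂ)
        = ((n : ℂ)) ^ 2 * ((((R : ℤ) ^ 2 - R : ℤ) : ℂ)) := by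
      rw [h6]; push_cast; ring
    have h8 := mul_left_cancel₀ hn2 h7
    exact_mod_cast h8

private lemma packing_charSum {c t : ℕ} {P : Fin t → Set H} {U : Subgroup H}
    (hc : 1 ≤ c) (ht : 1 ≤ t)
    (hU : Nat.card U = t * c)
    (hP : ∀ i, IsLatinPDS (P i) (t * c) c)
    (hdisj : ∀ i j, i ≠ j → Disjoint (P i) (P j))
    (hcover : (⋃ i, P i) = Set.univ \ (U : Set H))
    (I : Finset (Fin t)) {χ : H →* ℂˣ} (hχ : χ ≠ 1)
    {DI EI : Finset H}
    (hDImem : ∀ x, x ∈ DI ↔ x ∈ ⋃ i ∈ I, P i)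
    (hEImem : ∀ x, x ∈ EI ↔ x ∈ (⋃ i ∈ I, P i) ∪ ((U : Set H) \ {1})) :
    ((SS χ DI + ((I.card * c : ℕ) : ℂ)) *
      (SS χ DI - (((t * c : ℕ) : ℂ) - ((I.card * c : ℕ) : ℂ))) = 0) ∧
    ((SS χ EI + ((I.card * c + 1 : ℕ) : ℂ)) *
      (SS χ EI - (((t * c : ℕ) : ℂ) - ((I.card * c + 1 : ℕ) : ℂ))) = 0) := by
  set n := t * c with hn
  have hn1 : 1 ≤ n := Nat.one_le_iff_ne_zero.mpr (by positivity)
  have hnC : ((n : ℂ)) ≠ 0 := Nat.cast_ne_zero.mpr (by omega)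
  set Si : Fin t → ℂ := fun i => SS χ (P i).toFinset with hSi
  have hSialt : ∀ i, Si i = -(c : ℂ) ∨ Si i = (n : ℂ) - c := by
    intro i
    have := latin_charSum (fun x => Set.mem_toFinset) hn1 (hP i) hχ
    rcases mul_eq_zero.mp this with h | h
    · left; linear_combination h
    · right; linear_combination h
  have hPdisjF : ∀ i j : Fin t, i ≠ j → Disjoint (P i).toFinset (P j).toFinset := by
    intro i j hij
    rw [Set.disjoint_toFinset]
    exact hdisj i j hij
  have hDfin : DI = I.biUnion (fun i => (P i).toFinset) := by
    ext x; simp [hDImem, Set.mem_toFinset]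
  have hSsum : ∀ (J : Finset (Fin t)),
      (∑ i ∈ J, Si i) = SS χ (J.biUnion (fun i => (P i).toFinset)) := by
    intro J
    rw [SS, Finset.sum_biUnion]
    · rfl
    · intro i _ j _ hij
      exact hPdisjF i j hij
  set SU : ℂ := ∑ u ∈ (U : Set H).toFinset, (χ u : ℂ) with hSU
  have hUcard : (U : Set H).toFinset.card = n := by
    refine card_eq_of_natCard (fun x => Set.mem_toFinset) ?_
    rw [← hU]; rfl
  have htotal : ∑ i : Fin t, Si i = -SU := by
    have h1 : Finset.univ.biUnion (fun i => (P i).toFinset) = (⋃ i, P i).toFinset := by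
      ext x; simp [Set.mem_toFinset]
    rw [hSsum Finset.univ, h1]
    have h2 : (⋃ i, P i).toFinset = Finset.univ \ (U : Set H).toFinset := by
      ext x; simp [Set.mem_toFinset, hcover]
    rw [SS, h2, Finset.sum_sdiff_eq_sub (Finset.subset_univ _)]
    rw [sum_char_eq_zero χ hχ]
    ring
  set A : Finset (Fin t) := Finset.univ.filter (fun i => Si i ≠ -(c : ℂ)) with hAdef
  have hAval : ∀ i ∈ A, Si i = (n : ℂ) - c := by
    intro i hi
    exact (hSialt i).resolve_left (Finset.mem_filter.mp hi).2
  have hTsum : ∀ (J : Finset (Fin t)),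
      ∑ i ∈ J, (Si i + c) = ((J.filter (fun i => i ∈ A)).card : ℂ) * n := by
    intro J
    rw [← Finset.sum_filter_of_ne (p := fun i => i ∈ A)]
    · rw [Finset.sum_congr rfl (fun i hi => ?_), Finset.sum_const, nsmul_eq_mul]
      have := hAval i (Finset.mem_filter.mp hi).2
      rw [this]; ring
    · intro i _ hne
      by_contra hiA
      apply hne
      have : Si i = -(c : ℂ) := by
        by_contra hcon
        exact hiA (Finset.mem_filter.mpr ⟨Finset.mem_univ i, hcon⟩)
      rw [this]; ring
  have hTall : ∑ i : Fin t, (Si i + c) = ((t : ℂ) * c) - SU := by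
    rw [Finset.sum_add_distrib, htotal, Finset.sum_const]
    simp
    ring
  have hfilterall : (Finset.univ.filter (fun i : Fin t => i ∈ A)) = A := by
    ext i; simp [hAdef]
  have hD'fin : EI = DI ∪ ((U : Set H) \ {1}).toFinset := by
    ext x; simp [hEImem, hDImem, Set.mem_toFinset]
  have hDU : Disjoint DI ((U : Set H) \ {1}).toFinset := by
    rw [Finset.disjoint_left]
    intro x hx hx2
    rw [hDImem] at hx
    rw [Set.mem_toFinset] at hx2
    have hx3 : x ∈ ⋃ i, P i := by
      simp only [Set.mem_iUnion] at hx ⊢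
      obtain ⟨i, _, h⟩ := hx
      exact ⟨i, h⟩
    rw [hcover] at hx3
    exact hx3.2 hx2.1
  have hUerase : ((U : Set H) \ {1}).toFinset = ((U : Set H).toFinset).erase 1 := by
    ext x; simp [Set.mem_toFinset, and_comm]
  have hSU1 : ∑ u ∈ ((U : Set H) \ {1}).toFinset, (χ u : ℂ) = SU - 1 := by
    rw [hUerase, hSU]
    have h1U : (1 : H) ∈ (U : Set H).toFinset := by
      rw [Set.mem_toFinset]; exact U.one_mem
    have := Finset.sum_erase_add ((U : Set H).toFinset) (fun u => (χ u : ℂ)) h1U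
    simp only [map_one, Units.val_one] at this
    linear_combination this
  have hS'eq : SS χ EI = SS χ DI + (SU - 1) := by
    rw [hD'fin, SS, Finset.sum_union hDU, hSU1]; rfl
  have hSI : SS χ DI
      = ((I.filter (fun i => i ∈ A)).card : ℂ) * n - I.card * c := by
    rw [hDfin, ← hSsum I]
    have := hTsum I
    rw [Finset.sum_add_distrib, Finset.sum_const, nsmul_eq_mul] at this
    linear_combination this
  set k := (I.filter (fun i => i ∈ A)).card with hk
  by_cases hprin : ∀ u ∈ (U : Set H).toFinset, (χ u : ℂ) = 1
  · have hSUval : SU = (n : ℂ) := by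
      rw [hSU, Finset.sum_congr rfl hprin, Finset.sum_const, hUcard, nsmul_eq_mul, mul_one]
    have hA0 : (A.card : ℂ) * n = 0 := by
      have := hTall
      rw [hTsum Finset.univ, hfilterall, hSUval] at this
      push_cast [hn] at this ⊢
      linear_combination this
    have hAcard0 : A.card = 0 := by
      have : (A.card : ℂ) = 0 := by
        rcases mul_eq_zero.mp hA0 with h | h
        · exact h
        · exact absurd h hnC
      exact_mod_cast this
    have hk0 : k = 0 := by
      rw [hk]
      have hsub : I.filter (fun i => i ∈ A) ⊆ A := by
        intro i hi; exact (Finset.mem_filter.mp hi).2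
      have := Finset.card_le_card hsub
      omega
    constructor
    · apply mul_eq_zero_of_left
      rw [hSI, hk0]
      push_cast
      ring
    · apply mul_eq_zero_of_right
      rw [hS'eq, hSI, hk0, hSUval]
      push_cast
      ring
  · have hSUval : SU = 0 := by
      push_neg at hprin
      obtain ⟨u, huU, hu1⟩ := hprin
      rw [Set.mem_toFinset] at huU
      set ψ : ↥U →* ℂˣ := χ.comp U.subtype with hψ
      have hψne : ψ ≠ 1 := by
        intro hcon
        have h2 : χ u = 1 := by
          have := DFunLike.congr_fun hcon (⟨u, huU⟩ : ↥U)
          simpa [hψ] using this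
        exact hu1 (by rw [h2]; rfl)
      have h0 := sum_char_eq_zero ψ hψne
      have hsubty : ∑ u ∈ (U : Set H).toFinset, (χ u : ℂ)
          = ∑ x : {x : H // x ∈ U}, (χ x : ℂ) :=
        Finset.sum_subtype _ (fun x => by simp) (fun u => (χ u : ℂ))
      rw [hSU, hsubty, ← h0]
      exact Fintype.sum_equiv (Equiv.refl _) _ _ (fun x => rfl)
    have hA1 : (A.card : ℂ) * n = (n : ℂ) := by
      have := hTall
      rw [hTsum Finset.univ, hfilterall, hSUval] at this
      push_cast [hn] at this ⊢
      linear_combination this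
    have hAcard1 : A.card = 1 := by
      have h' : (A.card : ℂ) * n = 1 * n := by rw [hA1]; ring
      have : (A.card : ℂ) = 1 := mul_right_cancel₀ hnC h'
      exact_mod_cast this
    have hkle : k ≤ 1 := by
      rw [hk, ← hAcard1]
      exact Finset.card_le_card (fun i hi => (Finset.mem_filter.mp hi).2)
    rcases Nat.le_one_iff_eq_zero_or_eq_one.mp hkle with hk0 | hk1
    · constructor
      · apply mul_eq_zero_of_left
        rw [hSI, hk0]
        push_cast
        ring
      · apply mul_eq_zero_of_left
        rw [hS'eq, hSI, hk0, hSUval]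
        push_cast
        ring
    · constructor
      · apply mul_eq_zero_of_right
        rw [hSI, hk1]
        push_cast
        ring
      · apply mul_eq_zero_of_right
        rw [hS'eq, hSI, hk1, hSUval]
        push_cast
        ring

end LPAux

theorem stmt_6 {G : Type*} [CommGroup G] [Finite G] (c t : ℕ)
    (P : Fin t → Set G) (U : Subgroup G) (h : IsLPPacking c t P U)
    (I : Finset (Fin t)) (b : ℕ) (hb : I.card = b) :
    IsLatinPDS (⋃ i ∈ I, P i) (t * c) (b * c) ∧
    IsLatinPDS ((⋃ i ∈ I, P i) ∪ ((U : Set G) \ {1})) (t * c) (b * c + 1) := by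
  classical
  cases nonempty_fintype G
  obtain ⟨hG, hU, hP, hdisj, hcover⟩ := h
  have hGf : Fintype.card G = t ^ 2 * c ^ 2 := by rw [← Nat.card_eq_fintype_card, hG]
  have h0 : t ^ 2 * c ^ 2 ≠ 0 := by rw [← hGf]; exact Fintype.card_pos.ne'
  have hc : 1 ≤ c := Nat.one_le_iff_ne_zero.mpr (fun hh => by simp [hh] at h0)
  have ht : 1 ≤ t := Nat.one_le_iff_ne_zero.mpr (fun hh => by simp [hh] at h0)
  have hn1 : 1 ≤ t * c := Nat.one_le_iff_ne_zero.mpr (by positivity)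
  have hGn : Fintype.card G = (t * c) ^ 2 := by rw [hGf]; ring
  have hPone : ∀ i, (1 : G) ∉ P i := fun i => (hP i).2.1
  have hPsym : ∀ i, (P i)⁻¹ = P i := fun i => (hP i).2.2
  have hPmem : ∀ (i) (x : G), x⁻¹ ∈ P i ↔ x ∈ P i := by
    intro i x
    conv_rhs => rw [← hPsym i]
    rw [Set.mem_inv]
  have hPcard : ∀ i, (P i).toFinset.card = c * (t * c - 1) :=
    fun i => card_eq_of_natCard (fun x => Set.mem_toFinset) (hP i).1.2.1
  have hPdisjF : ∀ i j : Fin t, i ≠ j → Disjoint (P i).toFinset (P j).toFinset := by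
    intro i j hij
    rw [Set.disjoint_toFinset]
    exact hdisj i j hij
  have hone : (1 : G) ∉ ⋃ i ∈ I, P i := by
    intro h1
    simp only [Set.mem_iUnion] at h1
    obtain ⟨i, _, hi⟩ := h1
    exact hPone i hi
  have hsym : (⋃ i ∈ I, P i)⁻¹ = ⋃ i ∈ I, P i := by
    ext x
    simp only [Set.mem_inv, Set.mem_iUnion]
    constructor
    · rintro ⟨i, hi, hx⟩; exact ⟨i, hi, (hPmem i x).mp hx⟩
    · rintro ⟨i, hi, hx⟩; exact ⟨i, hi, (hPmem i x).mpr hx⟩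
  have hDfin : (⋃ i ∈ I, P i).toFinset = I.biUnion (fun i => (P i).toFinset) := by
    ext x; simp [Set.mem_toFinset]
  have hDcard : (⋃ i ∈ I, P i).toFinset.card = b * c * (t * c - 1) := by
    rw [hDfin, Finset.card_biUnion (fun i _ j _ hij => hPdisjF i j hij)]
    rw [Finset.sum_congr rfl (fun i _ => hPcard i), Finset.sum_const, smul_eq_mul, hb,
      ← mul_assoc]
  have part1 : IsLatinPDS (⋃ i ∈ I, P i) (t * c) (b * c) := by
    refine charSum_to_latin (fun x => Set.mem_toFinset) hn1 hGn hone hsym hDcard ?_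
    intro χ hχ
    have := (packing_charSum hc ht hU hP hdisj hcover I hχ
      (fun x => Set.mem_toFinset) (fun x => Set.mem_toFinset)).1
    rw [hb] at this
    exact_mod_cast this
  have hone' : (1 : G) ∉ (⋃ i ∈ I, P i) ∪ ((U : Set G) \ {1}) := by
    intro h1
    rcases h1 with h1 | h1
    · exact hone h1
    · exact h1.2 rfl
  have hsym' : ((⋃ i ∈ I, P i) ∪ ((U : Set G) \ {1}))⁻¹
      = (⋃ i ∈ I, P i) ∪ ((U : Set G) \ {1}) := by
    ext x
    simp only [Set.mem_inv, Set.mem_union, Set.mem_iUnion, Set.mem_diff,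
      Set.mem_singleton_iff, SetLike.mem_coe, inv_mem_iff, inv_eq_one]
    constructor
    · rintro (⟨i, hi, hx⟩ | hx)
      · exact Or.inl ⟨i, hi, (hPmem i x).mp hx⟩
      · exact Or.inr hx
    · rintro (⟨i, hi, hx⟩ | hx)
      · exact Or.inl ⟨i, hi, (hPmem i x).mpr hx⟩
      · exact Or.inr hx
  have hDU : Disjoint (⋃ i ∈ I, P i).toFinset ((U : Set G) \ {1}).toFinset := by
    rw [Finset.disjoint_left]
    intro x hx hx2
    rw [Set.mem_toFinset] at hx hx2
    have hx3 : x ∈ ⋃ i, P i := by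
      simp only [Set.mem_iUnion] at hx ⊢
      obtain ⟨i, _, hxx⟩ := hx
      exact ⟨i, hxx⟩
    rw [hcover] at hx3
    exact hx3.2 hx2.1
  have hUcard : (U : Set G).toFinset.card = t * c := by
    refine card_eq_of_natCard (fun x => Set.mem_toFinset) ?_
    rw [← hU]; rfl
  have hUerase : ((U : Set G) \ {1}).toFinset = ((U : Set G).toFinset).erase 1 := by
    ext x; simp [Set.mem_toFinset, and_comm]
  have hD'card : ((⋃ i ∈ I, P i) ∪ ((U : Set G) \ {1})).toFinset.card
      = (b * c + 1) * (t * c - 1) := by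
    have hsplit : ((⋃ i ∈ I, P i) ∪ ((U : Set G) \ {1})).toFinset
        = (⋃ i ∈ I, P i).toFinset ∪ ((U : Set G) \ {1}).toFinset := by
      ext x; simp [Set.mem_toFinset]
    rw [hsplit, Finset.card_union_of_disjoint hDU, hDcard, hUerase,
      Finset.card_erase_of_mem (by rw [Set.mem_toFinset]; exact U.one_mem), hUcard,
      add_one_mul]
  have part2 : IsLatinPDS ((⋃ i ∈ I, P i) ∪ ((U : Set G) \ {1})) (t * c) (b * c + 1) := by
    refine charSum_to_latin (fun x => Set.mem_toFinset) hn1 hGn hone' hsym' hD'card ?_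
    intro χ hχ
    have := (packing_charSum hc ht hU hP hdisj hcover I hχ
      (fun x => Set.mem_toFinset) (fun x => Set.mem_toFinset)).2
    rw [hb] at this
    exact_mod_cast this
  exact ⟨part1, part2⟩
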